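/- Let I = {1,…,N} be a finite set of players. For each i, let U_i ⊆ ℝ^{n_i} be a nonempty, compact, convex set, and let U = U_1 × ⋯ × U_N. For each i, let J_i : ℝ^{n_1} × ⋯ × ℝ^{n_N} → ℝ be such that for every fixed u_{-i}, the map u_i ↦ J_i(u_i, u_{-i}) is convex and differentiable, and let F_i(u) denote the gradient of this map at u_i. Assume the pseudo-gradient F(u) = (F_1(u),…,F_N(u)) is μ-cocoercive on U for some μ > 0, and let gains γ_i ∈ (0, 2μ) for all i. Then for any initialization u^0 ∈ U, the sequence generated by the iteration u_i^{k+1} = proj_{U_i}(u_i^k − γ_i F_i(u^k)) for all i converges to some u* ∈ U which is a Nash equilibrium of the game, i.e., for every i, J_i(u_i*, u_{-i}*) ≤ J_i(u_i, u_{-i}*) for all u_i ∈ U_i. -/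

import Mathlib

open Filter Topology RealInnerProductSpace

variable {E : Type*} [NormedAddCommGroup E] [InnerProductSpace ℝ E]

lemma aux_expand (a b : E) (t : ℝ) :
    ‖a - t • b‖ ^ 2 = ‖a‖ ^ 2 - 2 * (t * ⟪b, a⟫) + t ^ 2 * ‖b‖ ^ 2 := by
  rw [norm_sub_sq_real, real_inner_smul_right, norm_smul, mul_pow, real_inner_comm]
  simp [Real.norm_eq_abs, sq_abs]

lemma aux_vi {K : Set E} (hK : Convex ℝ K) {P : E → E}
    (hP : ∀ x, P x ∈ K ∧ ∀ z ∈ K, ‖x - P x‖ ≤ ‖x - z‖) (x : E) {z : E} (hz : z ∈ K) :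
    ⟪x - P x, z - P x⟫ ≤ 0 := by
  have h := norm_eq_iInf_iff_real_inner_le_zero (u := x) hK (hP x).1
  haveI : Nonempty K := ⟨⟨z, hz⟩⟩
  refine h.mp ?_ z hz
  refine le_antisymm (le_ciInf fun w => (hP x).2 w w.2) ?_
  exact ciInf_le ⟨0, by rintro r ⟨w, rfl⟩; positivity⟩ (⟨P x, (hP x).1⟩ : K)

lemma aux_firm {K : Set E} (hK : Convex ℝ K) {P : E → E}
    (hP : ∀ x, P x ∈ K ∧ ∀ z ∈ K, ‖x - P x‖ ≤ ‖x - z‖) (x y : E) :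
    ‖P x - P y‖ ^ 2 + ‖(x - y) - (P x - P y)‖ ^ 2 ≤ ‖x - y‖ ^ 2 := by
  have h1 := aux_vi hK hP x (hP y).1
  have h2 := aux_vi hK hP y (hP x).1
  have hb : ‖P x - P y‖ ^ 2 ≤ ⟪x - y, P x - P y⟫ := by
    rw [← real_inner_self_eq_norm_sq]
    simp only [inner_sub_left, inner_sub_right] at h1 h2 ⊢
    linarith [real_inner_comm (P x) (P y)]
  linarith [norm_sub_sq_real (x - y) (P x - P y), hb]

/-- first-order condition for convex functions -/
lemma aux_grad_ineq [CompleteSpace E] {g : E → ℝ} (hconv : ConvexOn ℝ Set.univ g) {x f : E}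
    (hg : HasGradientAt g f x) (v : E) : g x + ⟪f, v - x⟫ ≤ g v := by
  have hline : HasDerivAt (fun t : ℝ => x + t • (v - x)) (v - x) 0 := by
    simpa using ((hasDerivAt_id (0 : ℝ)).smul_const (v - x)).const_add x
  have hfd : HasFDerivAt g (InnerProductSpace.toDual ℝ E f) x := hg.hasFDerivAt
  have hfd' : HasFDerivAt g (InnerProductSpace.toDual ℝ E f)
      ((fun t : ℝ => x + t • (v - x)) 0) := by simpa using hfd
  have hcomp : HasDerivAt (fun t : ℝ => g (x + t • (v - x))) ⟪f, v - x⟫ 0 := by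
    have h := hfd'.comp_hasDerivAt (0 : ℝ) hline
    simpa [Function.comp_def, InnerProductSpace.toDual_apply_apply] using h
  set h : ℝ → ℝ := fun t => g (x + t • (v - x)) with hh
  have hslope : ∀ t : ℝ, t ∈ Set.Ioc (0 : ℝ) 1 → slope h 0 t ≤ g v - g x := by
    intro t ht
    have h1 : x + t • (v - x) = (1 - t) • x + t • v := by module
    have h2 := hconv.2 (Set.mem_univ x) (Set.mem_univ v)
      (by linarith [ht.2] : (0 : ℝ) ≤ 1 - t) ht.1.le (by ring)
    have h0 : h 0 = g x := by simp [hh]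
    have hht : h t ≤ (1 - t) * g x + t * g v := by
      rw [hh]; dsimp only; rw [h1]; exact h2
    rw [slope_def_field, sub_zero, div_le_iff₀ ht.1]
    nlinarith [hht, h0]
  have htend : Tendsto (slope h 0) (𝓝[>] (0 : ℝ)) (𝓝 ⟪f, v - x⟫) :=
    (hasDerivAt_iff_tendsto_slope.mp hcomp).mono_left
      (nhdsWithin_mono 0 (fun s hs => Set.mem_compl_singleton_iff.mpr (ne_of_gt hs)))
  have hle : ⟪f, v - x⟫ ≤ g v - g x := by
    refine le_of_tendsto htend ?_
    filter_upwards [Ioc_mem_nhdsGT (one_pos : (0:ℝ) < 1)] with t ht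
      using hslope t ht
  linarith

set_option maxHeartbeats 1000000 in
theorem multiArea_OFO_converges_to_Nash
    (N : ℕ) (n : Fin N → ℕ)
    (U : ∀ i, Set (EuclideanSpace ℝ (Fin (n i))))
    (hUne : ∀ i, (U i).Nonempty)
    (hUcomp : ∀ i, IsCompact (U i))
    (hUconv : ∀ i, Convex ℝ (U i))
    (J : ∀ i, (∀ j, EuclideanSpace ℝ (Fin (n j))) → ℝ)
    (F : ∀ i, (∀ j, EuclideanSpace ℝ (Fin (n j))) → EuclideanSpace ℝ (Fin (n i)))
    (hJconv : ∀ (i) (u : ∀ j, EuclideanSpace ℝ (Fin (n j))),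
      ConvexOn ℝ Set.univ fun v => J i (Function.update u i v))
    (hF : ∀ (i) (u : ∀ j, EuclideanSpace ℝ (Fin (n j))),
      HasGradientAt (fun v => J i (Function.update u i v)) (F i u) (u i))
    (μ : ℝ) (hμ : 0 < μ)
    (hcoco : ∀ u u' : ∀ j, EuclideanSpace ℝ (Fin (n j)),
      (∀ i, u i ∈ U i) → (∀ i, u' i ∈ U i) →
      ∑ i, ⟪F i u - F i u', u i - u' i⟫ ≥ μ * ∑ i, ‖F i u - F i u'‖ ^ 2)
    (γ : Fin N → ℝ) (hγ : ∀ i, 0 < γ i ∧ γ i < 2 * μ)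
    (proj : ∀ i, EuclideanSpace ℝ (Fin (n i)) → EuclideanSpace ℝ (Fin (n i)))
    (hproj : ∀ i x, proj i x ∈ U i ∧ ∀ z ∈ U i, ‖x - proj i x‖ ≤ ‖x - z‖)
    (seq : ℕ → ∀ j, EuclideanSpace ℝ (Fin (n j)))
    (hseq0 : ∀ i, seq 0 i ∈ U i)
    (hstep : ∀ k i, seq (k + 1) i = proj i (seq k i - γ i • F i (seq k))) :
    ∃ ustar : ∀ j, EuclideanSpace ℝ (Fin (n j)),
      (∀ i, ustar i ∈ U i) ∧
      Tendsto seq atTop (𝓝 ustar) ∧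
      ∀ i, ∀ v ∈ U i, J i ustar ≤ J i (Function.update ustar i v) := by
  classical
  set T : (∀ j, EuclideanSpace ℝ (Fin (n j))) → (∀ j, EuclideanSpace ℝ (Fin (n j))) :=
    fun u i => proj i (u i - γ i • F i u) with hT
  have hstep' : ∀ k, seq (k + 1) = T (seq k) := fun k => funext fun i => hstep k i
  have hInU_T : ∀ u i, T u i ∈ U i := fun u i => (hproj i _).1
  have hseqU : ∀ k i, seq k i ∈ U i := by
    intro k
    induction k with
    | zero => exact hseq0
    | succ k ih => intro i; rw [hstep' k]; exact hInU_T _ i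
  obtain ⟨c, hc0, hc2, hcγ⟩ : ∃ c, 0 < c ∧ c < 2 * μ ∧ ∀ i, γ i ≤ c := by
    rcases isEmpty_or_nonempty (Fin N) with h | h
    · exact ⟨μ, hμ, by linarith, fun i => (h.false i).elim⟩
    · obtain ⟨i0, -, hi0⟩ := Finset.exists_max_image Finset.univ γ ⟨h.some, Finset.mem_univ _⟩
      exact ⟨γ i0, (hγ i0).1, (hγ i0).2, fun i => hi0 i (Finset.mem_univ i)⟩
  set W : (∀ j, EuclideanSpace ℝ (Fin (n j))) → (∀ j, EuclideanSpace ℝ (Fin (n j))) → ℝ :=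
    fun u v => ∑ i, (γ i)⁻¹ * ‖u i - v i‖ ^ 2 with hW
  have hWnonneg : ∀ u v, 0 ≤ W u v := fun u v =>
    Finset.sum_nonneg fun i _ => mul_nonneg (inv_nonneg.2 (hγ i).1.le) (sq_nonneg _)
  have hcoord : ∀ (f : Fin N → ℝ), (∀ j, 0 ≤ f j) → ∀ i, f i ≤ γ i * ∑ j, (γ j)⁻¹ * f j := by
    intro f hf i
    have h1 : (γ i)⁻¹ * f i ≤ ∑ j, (γ j)⁻¹ * f j :=
      Finset.single_le_sum (f := fun j => (γ j)⁻¹ * f j)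
        (fun j _ => mul_nonneg (inv_nonneg.2 (hγ j).1.le) (hf j)) (Finset.mem_univ i)
    have hγi := (hγ i).1
    calc f i = γ i * ((γ i)⁻¹ * f i) := by field_simp
      _ ≤ γ i * ∑ j, (γ j)⁻¹ * f j := mul_le_mul_of_nonneg_left h1 hγi.le
  have hWcoord : ∀ u v i, ‖u i - v i‖ ^ 2 ≤ γ i * W u v := fun u v i =>
    hcoord (fun j => ‖u j - v j‖ ^ 2) (fun j => sq_nonneg _) i
  -- the key descent inequality
  have key : ∀ u u', (∀ i, u i ∈ U i) → (∀ i, u' i ∈ U i) →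
      W (T u) (T u')
        + ∑ i, (γ i)⁻¹ * ‖(u i - u' i) - γ i • (F i u - F i u') - (T u i - T u' i)‖ ^ 2
      ≤ W u u' - (2 * μ - c) * ∑ i, ‖F i u - F i u'‖ ^ 2 := by
    intro u u' hu hu'
    have coord : ∀ i, ‖T u i - T u' i‖ ^ 2
        + ‖(u i - u' i) - γ i • (F i u - F i u') - (T u i - T u' i)‖ ^ 2
        ≤ ‖(u i - u' i) - γ i • (F i u - F i u')‖ ^ 2 := by
      intro i
      have e : (u i - γ i • F i u) - (u' i - γ i • F i u')
          = (u i - u' i) - γ i • (F i u - F i u') := by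
        rw [smul_sub]; abel
      have h := aux_firm (hUconv i) (hproj i) (u i - γ i • F i u) (u' i - γ i • F i u')
      rw [e] at h
      exact h
    have sum1 := Finset.sum_le_sum (s := Finset.univ)
      (fun i _ => mul_le_mul_of_nonneg_left (coord i) (inv_nonneg.2 (hγ i).1.le))
    have lhs_eq : (∑ i, (γ i)⁻¹ * (‖T u i - T u' i‖ ^ 2
          + ‖(u i - u' i) - γ i • (F i u - F i u') - (T u i - T u' i)‖ ^ 2))
        = W (T u) (T u')
          + ∑ i, (γ i)⁻¹ * ‖(u i - u' i) - γ i • (F i u - F i u') - (T u i - T u' i)‖ ^ 2 := by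
      rw [hW, ← Finset.sum_add_distrib]
      exact Finset.sum_congr rfl fun i _ => by ring
    have rhs_eq : (∑ i, (γ i)⁻¹ * ‖(u i - u' i) - γ i • (F i u - F i u')‖ ^ 2)
        = W u u' - 2 * (∑ i, ⟪F i u - F i u', u i - u' i⟫)
          + ∑ i, γ i * ‖F i u - F i u'‖ ^ 2 := by
      rw [hW, Finset.mul_sum, ← Finset.sum_sub_distrib, ← Finset.sum_add_distrib]
      refine Finset.sum_congr rfl fun i _ => ?_
      have hne : γ i ≠ 0 := ne_of_gt (hγ i).1
      rw [aux_expand (u i - u' i) (F i u - F i u') (γ i)]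
      field_simp
    rw [lhs_eq, rhs_eq] at sum1
    have hco := hcoco u u' hu hu'
    have hG : (∑ i, γ i * ‖F i u - F i u'‖ ^ 2) ≤ c * ∑ i, ‖F i u - F i u'‖ ^ 2 := by
      rw [Finset.mul_sum]
      exact Finset.sum_le_sum fun i _ => mul_le_mul_of_nonneg_right (hcγ i) (sq_nonneg _)
    nlinarith [sum1, hco, hG]
  have keyW : ∀ u u', (∀ i, u i ∈ U i) → (∀ i, u' i ∈ U i) → W (T u) (T u') ≤ W u u' := by
    intro u u' hu hu'
    have h := key u u' hu hu'
    have h1 : 0 ≤ ∑ i, (γ i)⁻¹ * ‖(u i - u' i) - γ i • (F i u - F i u') - (T u i - T u' i)‖ ^ 2 :=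
      Finset.sum_nonneg fun i _ => mul_nonneg (inv_nonneg.2 (hγ i).1.le) (sq_nonneg _)
    have h2 : 0 ≤ (2 * μ - c) * ∑ i, ‖F i u - F i u'‖ ^ 2 := by
      have : (0:ℝ) ≤ ∑ i, ‖F i u - F i u'‖ ^ 2 := Finset.sum_nonneg fun i _ => sq_nonneg _
      nlinarith
    linarith
  -- convergence transfer lemmas
  have hWzero_of : ∀ (x : ℕ → ∀ j, EuclideanSpace ℝ (Fin (n j))) p,
      Tendsto x atTop (𝓝 p) → Tendsto (fun m => W (x m) p) atTop (𝓝 0) := by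
    intro x p hxp
    have hcont : Continuous fun u : (∀ j, EuclideanSpace ℝ (Fin (n j))) => W u p := by
      rw [hW]
      apply continuous_finset_sum
      intro i _
      exact continuous_const.mul (((continuous_apply i).sub continuous_const).norm.pow 2)
    have h := (hcont.tendsto p).comp hxp
    have hz : W p p = 0 := by
      rw [hW]; simp
    rw [hz] at h
    exact h
  have hof_Wzero : ∀ (x : ℕ → ∀ j, EuclideanSpace ℝ (Fin (n j))) p,
      Tendsto (fun m => W (x m) p) atTop (𝓝 0) → Tendsto x atTop (𝓝 p) := by
    intro x p hWz
    rw [tendsto_pi_nhds]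
    intro i
    rw [tendsto_iff_norm_sub_tendsto_zero]
    have hb : ∀ m, ‖x m i - p i‖ ≤ Real.sqrt (γ i * W (x m) p) := by
      intro m
      rw [show ‖x m i - p i‖ = Real.sqrt (‖x m i - p i‖ ^ 2) from
        (Real.sqrt_sq (norm_nonneg _)).symm]
      exact Real.sqrt_le_sqrt (hWcoord _ _ i)
    have hsq : Tendsto (fun m => Real.sqrt (γ i * W (x m) p)) atTop (𝓝 0) := by
      have h2 : Tendsto (fun m => γ i * W (x m) p) atTop (𝓝 (γ i * 0)) := hWz.const_mul _
      rw [mul_zero] at h2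
      have h3 := (Real.continuous_sqrt.tendsto 0).comp h2
      simpa [Function.comp_def] using h3
    exact squeeze_zero (fun m => norm_nonneg _) hb hsq
  have hTcont : ∀ (x : ℕ → ∀ j, EuclideanSpace ℝ (Fin (n j))) p,
      (∀ m i, x m i ∈ U i) → (∀ i, p i ∈ U i) → Tendsto x atTop (𝓝 p) →
      Tendsto (fun m => T (x m)) atTop (𝓝 (T p)) := by
    intro x p hx hp hxp
    have hWz := hWzero_of x p hxp
    have hWT : Tendsto (fun m => W (T (x m)) (T p)) atTop (𝓝 0) :=
      squeeze_zero (fun m => hWnonneg _ _) (fun m => keyW _ _ (hx m) hp) hWz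
    exact hof_Wzero _ _ hWT
  -- existence of a fixed point
  obtain ⟨p, hpU, hpfix⟩ : ∃ p, (∀ i, p i ∈ U i) ∧ T p = p := by
    set c0 : ∀ j, EuclideanSpace ℝ (Fin (n j)) := fun i => (hUne i).some with hc0def
    have hc0U : ∀ i, c0 i ∈ U i := fun i => (hUne i).some_mem
    have hfix_t : ∀ t : ℝ, 0 ≤ t → t < 1 →
        ∃ z, (∀ i, z i ∈ U i) ∧ ∀ i, z i = (1 - t) • c0 i + t • T z i := by
      intro t ht0 ht1
      set S : (∀ j, EuclideanSpace ℝ (Fin (n j))) → (∀ j, EuclideanSpace ℝ (Fin (n j))) :=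
        fun u i => (1 - t) • c0 i + t • T u i with hS
      have hSU : ∀ u i, S u i ∈ U i := fun u i =>
        (hUconv i) (hc0U i) (hInU_T u i) (by linarith) ht0 (by ring)
      have hScon : ∀ u v, (∀ i, u i ∈ U i) → (∀ i, v i ∈ U i) →
          W (S u) (S v) ≤ t ^ 2 * W u v := by
        intro u v hu hv
        have he : W (S u) (S v) = t ^ 2 * W (T u) (T v) := by
          rw [hW, hS, Finset.mul_sum]
          refine Finset.sum_congr rfl fun i _ => ?_
          have e2 : ((1 - t) • c0 i + t • T u i) - ((1 - t) • c0 i + t • T v i)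
              = t • (T u i - T v i) := by rw [smul_sub]; abel
          rw [e2, norm_smul]
          simp only [Real.norm_eq_abs, mul_pow, sq_abs]
          ring
        rw [he]
        exact mul_le_mul_of_nonneg_left (keyW u v hu hv) (sq_nonneg t)
      set y : ℕ → ∀ j, EuclideanSpace ℝ (Fin (n j)) := fun m => S^[m] c0 with hy
      have hysucc : ∀ m, y (m + 1) = S (y m) := fun m => Function.iterate_succ_apply' S m c0
      have hyU : ∀ m i, y m i ∈ U i := by
        intro m
        induction m with
        | zero => exact hc0U
        | succ m ih => rw [hysucc]; exact hSU _
      have hWgeo : ∀ m, W (y m) (y (m + 1)) ≤ (t ^ 2) ^ m * W (y 0) (y 1) := by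
        intro m
        induction m with
        | zero => simpa using le_refl (W (y 0) (y 1))
        | succ m ih =>
          have h := hScon (y m) (y (m + 1)) (hyU m) (hyU (m + 1))
          rw [← hysucc m, ← hysucc (m + 1)] at h
          calc W (y (m + 1)) (y (m + 1 + 1)) ≤ t ^ 2 * W (y m) (y (m + 1)) := h
            _ ≤ t ^ 2 * ((t ^ 2) ^ m * W (y 0) (y 1)) :=
                mul_le_mul_of_nonneg_left ih (sq_nonneg t)
            _ = (t ^ 2) ^ (m + 1) * W (y 0) (y 1) := by ring
      have hdist : ∀ m, dist (y m) (y (m + 1))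
          ≤ Real.sqrt (c * W (y 0) (y 1)) * t ^ m := by
        intro m
        rw [dist_pi_le_iff (mul_nonneg (Real.sqrt_nonneg _) (pow_nonneg ht0 _))]
        intro i
        rw [dist_eq_norm]
        have h1 : ‖y m i - y (m + 1) i‖ ≤ Real.sqrt (γ i * W (y m) (y (m + 1))) := by
          rw [show ‖y m i - y (m + 1) i‖ = Real.sqrt (‖y m i - y (m + 1) i‖ ^ 2) from
            (Real.sqrt_sq (norm_nonneg _)).symm]
          exact Real.sqrt_le_sqrt (hWcoord _ _ i)
        have h2 : γ i * W (y m) (y (m + 1)) ≤ (c * W (y 0) (y 1)) * (t ^ m) ^ 2 := by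
          have h3 : γ i * W (y m) (y (m + 1)) ≤ c * W (y m) (y (m + 1)) :=
            mul_le_mul_of_nonneg_right (hcγ i) (hWnonneg _ _)
          have h4 : c * W (y m) (y (m + 1)) ≤ c * ((t ^ 2) ^ m * W (y 0) (y 1)) :=
            mul_le_mul_of_nonneg_left (hWgeo m) hc0.le
          calc γ i * W (y m) (y (m + 1)) ≤ c * ((t ^ 2) ^ m * W (y 0) (y 1)) := le_trans h3 h4
            _ = (c * W (y 0) (y 1)) * (t ^ m) ^ 2 := by ring
        calc ‖y m i - y (m + 1) i‖ ≤ Real.sqrt ((c * W (y 0) (y 1)) * (t ^ m) ^ 2) :=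
              le_trans h1 (Real.sqrt_le_sqrt h2)
          _ = Real.sqrt (c * W (y 0) (y 1)) * t ^ m := by
              rw [Real.sqrt_mul (mul_nonneg hc0.le (hWnonneg _ _)), Real.sqrt_sq (pow_nonneg ht0 _)]
      have hcauchy : CauchySeq y :=
        cauchySeq_of_le_geometric t (Real.sqrt (c * W (y 0) (y 1))) ht1 hdist
      obtain ⟨z, hz⟩ := cauchySeq_tendsto_of_complete hcauchy
      have hzU : ∀ i, z i ∈ U i := by
        intro i
        have hco : Tendsto (fun m => y m i) atTop (𝓝 (z i)) := (tendsto_pi_nhds.mp hz) i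
        exact (hUcomp i).isClosed.mem_of_tendsto hco (Eventually.of_forall fun m => hyU m i)
      have hSz : S z = z := by
        have h1 : Tendsto (fun m => y (m + 1)) atTop (𝓝 z) := hz.comp (tendsto_add_atTop_nat 1)
        have hTz : Tendsto (fun m => T (y m)) atTop (𝓝 (T z)) := hTcont y z hyU hzU hz
        have h2 : Tendsto (fun m => S (y m)) atTop (𝓝 (S z)) := by
          rw [tendsto_pi_nhds]
          intro i
          exact tendsto_const_nhds.add (((tendsto_pi_nhds.mp hTz) i).const_smul t)
        have he : (fun m => y (m + 1)) = fun m => S (y m) := funext hysucc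
        have h3 : Tendsto (fun m => y (m + 1)) atTop (𝓝 (S z)) := by
          rw [he]; exact h2
        exact tendsto_nhds_unique h3 h1
      exact ⟨z, hzU, fun i => (congrFun hSz i).symm⟩
    have hts : ∀ m : ℕ, 0 ≤ 1 - (1 / ((m : ℝ) + 2)) ∧ 1 - (1 / ((m : ℝ) + 2)) < 1 := by
      intro m
      have h2 : (0 : ℝ) < (m : ℝ) + 2 := by positivity
      constructor
      · have : 1 / ((m : ℝ) + 2) ≤ 1 := by rw [div_le_one h2]; linarith
        linarith
      · have : 0 < 1 / ((m : ℝ) + 2) := by positivity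
        linarith
    choose z hzU hzfix using fun (m : ℕ) => hfix_t (1 - 1 / ((m : ℝ) + 2)) (hts m).1 (hts m).2
    obtain ⟨p, hpC, φ, hφ, hzp⟩ := IsCompact.tendsto_subseq (isCompact_univ_pi hUcomp)
      (x := z) (fun m => Set.mem_univ_pi.mpr (hzU m))
    have hpU : ∀ i, p i ∈ U i := fun i => hpC i (Set.mem_univ i)
    have hTz : Tendsto (fun k => T (z (φ k))) atTop (𝓝 (T p)) :=
      hTcont (fun k => z (φ k)) p (fun k => hzU (φ k)) hpU hzp
    have heps : Tendsto (fun k => (1 / ((φ k : ℝ) + 2))) atTop (𝓝 0) := by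
      have h1 : Tendsto (fun k => ((φ k : ℝ) + 2)) atTop atTop :=
        tendsto_atTop_add_const_right _ 2 (tendsto_natCast_atTop_atTop.comp hφ.tendsto_atTop)
      simpa [one_div, Pi.inv_def] using h1.inv_tendsto_atTop
    have hfixp : T p = p := by
      funext i
      have hd1 : Tendsto (fun k => z (φ k) i - T (z (φ k)) i) atTop (𝓝 (p i - T p i)) :=
        ((tendsto_pi_nhds.mp hzp) i).sub ((tendsto_pi_nhds.mp hTz) i)
      have hd2 : ∀ k, z (φ k) i - T (z (φ k)) i
          = (1 / ((φ k : ℝ) + 2)) • (c0 i - T (z (φ k)) i) := by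
        intro k
        rw [hzfix (φ k) i]
        module
      simp only [hd2] at hd1
      have hd3 : Tendsto (fun k => (1 / ((φ k : ℝ) + 2)) • (c0 i - T (z (φ k)) i))
          atTop (𝓝 ((0 : ℝ) • (c0 i - T p i))) :=
        heps.smul (tendsto_const_nhds.sub ((tendsto_pi_nhds.mp hTz) i))
      rw [zero_smul] at hd3
      have h0 : p i - T p i = 0 := tendsto_nhds_unique hd1 hd3
      exact (sub_eq_zero.mp h0).symm
    exact ⟨p, hpU, hfixp⟩
  -- Fejér monotonicity toward p
  have hkey : ∀ k, W (seq (k + 1)) p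
      + ∑ i, (γ i)⁻¹ * ‖seq k i - p i - γ i • (F i (seq k) - F i p) - (seq (k + 1) i - p i)‖ ^ 2
      ≤ W (seq k) p - (2 * μ - c) * ∑ i, ‖F i (seq k) - F i p‖ ^ 2 := by
    intro k
    have h := key (seq k) p (hseqU k) hpU
    rw [hpfix, ← hstep' k] at h
    exact h
  have hRnn : ∀ k, 0 ≤ ∑ i, (γ i)⁻¹ *
      ‖seq k i - p i - γ i • (F i (seq k) - F i p) - (seq (k + 1) i - p i)‖ ^ 2 :=
    fun k => Finset.sum_nonneg fun i _ => mul_nonneg (inv_nonneg.2 (hγ i).1.le) (sq_nonneg _)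
  have hDnn : ∀ k, (0:ℝ) ≤ ∑ i, ‖F i (seq k) - F i p‖ ^ 2 :=
    fun k => Finset.sum_nonneg fun i _ => sq_nonneg _
  have h2μc : (0:ℝ) < 2 * μ - c := by linarith
  have hanti : ∀ k, W (seq (k + 1)) p ≤ W (seq k) p := by
    intro k
    nlinarith [hkey k, hRnn k, hDnn k]
  set a : ℕ → ℝ := fun k => W (seq k) p with ha
  have haA : Antitone a := antitone_nat_of_succ_le hanti
  have halim : Tendsto a atTop (𝓝 (⨅ k, a k)) :=
    tendsto_atTop_ciInf haA ⟨0, by rintro r ⟨k, rfl⟩; exact hWnonneg _ _⟩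
  have hslack : Tendsto (fun k => a k - a (k + 1)) atTop (𝓝 0) := by
    have h2 := halim.comp (tendsto_add_atTop_nat 1)
    have h3 := halim.sub h2
    simpa using h3
  have hDzero : Tendsto (fun k => ∑ i, ‖F i (seq k) - F i p‖ ^ 2) atTop (𝓝 0) := by
    refine squeeze_zero (g := fun k => (a k - a (k + 1)) / (2 * μ - c)) hDnn (fun k => ?_) ?_
    · rw [le_div_iff₀ h2μc]
      nlinarith [hkey k, hRnn k]
    · have := hslack.div_const (2 * μ - c)
      simpa using this
  have hRzero : Tendsto (fun k => ∑ i, (γ i)⁻¹ *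
      ‖seq k i - p i - γ i • (F i (seq k) - F i p) - (seq (k + 1) i - p i)‖ ^ 2)
      atTop (𝓝 0) := by
    refine squeeze_zero hRnn (fun k => ?_) hslack
    nlinarith [hkey k, hDnn k]
  -- per-coordinate successive differences tend to zero
  have hdiff : ∀ i, Tendsto (fun k => ‖seq k i - seq (k + 1) i‖) atTop (𝓝 0) := by
    intro i
    have hb : ∀ k, ‖seq k i - seq (k + 1) i‖
        ≤ Real.sqrt (γ i * (∑ j, (γ j)⁻¹ *
            ‖seq k j - p j - γ j • (F j (seq k) - F j p) - (seq (k + 1) j - p j)‖ ^ 2))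
          + γ i * Real.sqrt (∑ j, ‖F j (seq k) - F j p‖ ^ 2) := by
      intro k
      have he : seq k i - seq (k + 1) i
          = (seq k i - p i - γ i • (F i (seq k) - F i p) - (seq (k + 1) i - p i))
            + γ i • (F i (seq k) - F i p) := by module
      rw [he]
      refine le_trans (norm_add_le _ _) (add_le_add ?_ ?_)
      · rw [show ‖seq k i - p i - γ i • (F i (seq k) - F i p) - (seq (k + 1) i - p i)‖
            = Real.sqrt (‖seq k i - p i - γ i • (F i (seq k) - F i p) - (seq (k + 1) i - p i)‖ ^ 2)
          from (Real.sqrt_sq (norm_nonneg _)).symm]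
        apply Real.sqrt_le_sqrt
        exact hcoord
          (fun j => ‖seq k j - p j - γ j • (F j (seq k) - F j p) - (seq (k + 1) j - p j)‖ ^ 2)
          (fun j => sq_nonneg _) i
      · rw [norm_smul, Real.norm_eq_abs, abs_of_pos (hγ i).1]
        refine mul_le_mul_of_nonneg_left ?_ (hγ i).1.le
        rw [show ‖F i (seq k) - F i p‖ = Real.sqrt (‖F i (seq k) - F i p‖ ^ 2) from
          (Real.sqrt_sq (norm_nonneg _)).symm]
        exact Real.sqrt_le_sqrt (Finset.single_le_sum
          (fun j _ => sq_nonneg (‖F j (seq k) - F j p‖)) (Finset.mem_univ i))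
    refine squeeze_zero (fun k => norm_nonneg _) hb ?_
    have hs1 : Tendsto (fun k => Real.sqrt (γ i * (∑ j, (γ j)⁻¹ *
        ‖seq k j - p j - γ j • (F j (seq k) - F j p) - (seq (k + 1) j - p j)‖ ^ 2)))
        atTop (𝓝 0) := by
      have h2 := hRzero.const_mul (γ i)
      rw [mul_zero] at h2
      have h3 := (Real.continuous_sqrt.tendsto 0).comp h2
      simpa [Function.comp_def] using h3
    have hs2 : Tendsto (fun k => γ i * Real.sqrt (∑ j, ‖F j (seq k) - F j p‖ ^ 2))
        atTop (𝓝 0) := by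
      have h3 := (Real.continuous_sqrt.tendsto 0).comp hDzero
      have h4 := h3.const_mul (γ i)
      simpa using h4
    have h5 := hs1.add hs2
    simpa using h5
  -- cluster point of the sequence
  obtain ⟨uh, huhC, ψ, hψ, hsψ⟩ := IsCompact.tendsto_subseq (isCompact_univ_pi hUcomp)
    (x := seq) (fun k => Set.mem_univ_pi.mpr (fun i => hseqU k i))
  have huhU : ∀ i, uh i ∈ U i := fun i => huhC i (Set.mem_univ i)
  have hsψ1 : Tendsto (fun k => seq (ψ k + 1)) atTop (𝓝 uh) := by
    rw [tendsto_pi_nhds]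
    intro i
    have h1 : Tendsto (fun k => seq (ψ k) i) atTop (𝓝 (uh i)) := (tendsto_pi_nhds.mp hsψ) i
    have h2 : Tendsto (fun k => seq (ψ k) i - seq (ψ k + 1) i) atTop (𝓝 0) := by
      rw [tendsto_zero_iff_norm_tendsto_zero]
      exact (hdiff i).comp hψ.tendsto_atTop
    have h3 := h1.sub h2
    simpa using h3
  have hTuh : Tendsto (fun k => T (seq (ψ k))) atTop (𝓝 (T uh)) :=
    hTcont (fun k => seq (ψ k)) uh (fun k i => hseqU _ i) huhU hsψ
  have hfixuh : T uh = uh := by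
    have he : (fun k => seq (ψ k + 1)) = fun k => T (seq (ψ k)) :=
      funext fun k => hstep' (ψ k)
    rw [he] at hsψ1
    exact tendsto_nhds_unique hTuh hsψ1
  -- Fejér monotonicity toward uh, full convergence
  have hantiuh : ∀ k, W (seq (k + 1)) uh ≤ W (seq k) uh := by
    intro k
    have h := keyW (seq k) uh (hseqU k) huhU
    rw [hfixuh, ← hstep' k] at h
    exact h
  set b : ℕ → ℝ := fun k => W (seq k) uh with hbdef
  have hbA : Antitone b := antitone_nat_of_succ_le hantiuh
  have hblim : Tendsto b atTop (𝓝 (⨅ k, b k)) :=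
    tendsto_atTop_ciInf hbA ⟨0, by rintro r ⟨k, rfl⟩; exact hWnonneg _ _⟩
  have hbψ : Tendsto (fun k => b (ψ k)) atTop (𝓝 0) :=
    hWzero_of (fun k => seq (ψ k)) uh hsψ
  have hinf0 : (⨅ k, b k) = 0 := by
    have hle : (⨅ k, b k) ≤ 0 :=
      ge_of_tendsto' hbψ fun k =>
        ciInf_le ⟨0, by rintro r ⟨j, rfl⟩; exact hWnonneg _ _⟩ (ψ k)
    have hge : 0 ≤ ⨅ k, b k := le_ciInf fun k => hWnonneg _ _
    linarith
  rw [hinf0] at hblim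
  have hconv : Tendsto seq atTop (𝓝 uh) := hof_Wzero seq uh hblim
  -- Nash property
  refine ⟨uh, huhU, hconv, ?_⟩
  intro i v hv
  have hPfix : proj i (uh i - γ i • F i uh) = uh i := congrFun hfixuh i
  have hvi := aux_vi (hUconv i) (hproj i) (uh i - γ i • F i uh) hv
  rw [hPfix] at hvi
  have hvi2 : 0 ≤ ⟪F i uh, v - uh i⟫ := by
    have he : (uh i - γ i • F i uh) - uh i = -(γ i • F i uh) := by module
    rw [he, inner_neg_left, real_inner_smul_left] at hvi
    nlinarith [(hγ i).1, hvi]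
  have hgrad := aux_grad_ineq (hJconv i uh) (hF i uh) v
  simp only [Function.update_eq_self] at hgrad
  linarith [hvi2, hgrad]
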